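/- arXiv:2104.14669 — 5 statements merged into one kernel-verified Lean document; each statement's English description precedes it below -/
import Mathlib

section
/- The relation R_S(p, x) defined by 'p represents x in signed digit representation' is the greatest relation R on streams of signed digits and reals satisfying R(d :: p, x) ↔ (x ∈ I_d ∧ R(p, 2x - d)); i.e., R_S satisfies this unfolding and contains every relation satisfying it. -/
/-- `p` is a stream of signed digits representing `x`. -/
def RS (p : ℕ → ℤ) (x : ℝ) : Prop :=
  (∀ i, p i = -1 ∨ p i = 0 ∨ p i = 1) ∧ x = ∑' i : ℕ, (p i : ℝ) / 2 ^ (i + 1)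

lemma digit_abs_le {p : ℕ → ℤ} (hp : ∀ i, p i = -1 ∨ p i = 0 ∨ p i = 1) (i : ℕ) :
    |(p i : ℝ)| ≤ 1 := by
  rcases hp i with h | h | h <;> simp [h]

lemma term_norm_le {p : ℕ → ℤ} (hp : ∀ i, p i = -1 ∨ p i = 0 ∨ p i = 1) (i : ℕ) :
    ‖(p i : ℝ) / 2 ^ (i + 1)‖ ≤ (1:ℝ) / 2 ^ (i + 1) := by
  have h2 : (0:ℝ) < 2 ^ (i+1) := by positivity
  rw [Real.norm_eq_abs, abs_div, abs_of_pos h2]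
  exact div_le_div_of_nonneg_right (digit_abs_le hp i) h2.le

lemma RS_summable_norm {p : ℕ → ℤ} (hp : ∀ i, p i = -1 ∨ p i = 0 ∨ p i = 1) :
    Summable (fun i : ℕ => ‖(p i : ℝ) / 2 ^ (i + 1)‖) := by
  apply Summable.of_nonneg_of_le (fun i => norm_nonneg _) (term_norm_le hp)
  simpa [pow_succ, div_div, mul_comm, div_eq_mul_inv] using (summable_geometric_two' 1)

lemma RS_summable {p : ℕ → ℤ} (hp : ∀ i, p i = -1 ∨ p i = 0 ∨ p i = 1) :
    Summable (fun i : ℕ => (p i : ℝ) / 2 ^ (i + 1)) :=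
  (RS_summable_norm hp).of_norm

lemma RS_tail_bound {p : ℕ → ℤ} (hp : ∀ i, p i = -1 ∨ p i = 0 ∨ p i = 1) :
    |∑' i : ℕ, (p i : ℝ) / 2 ^ (i + 1)| ≤ 1 := by
  calc |∑' i : ℕ, (p i : ℝ) / 2 ^ (i + 1)| ≤ ∑' i : ℕ, ‖(p i : ℝ) / 2 ^ (i + 1)‖ :=
        norm_tsum_le_tsum_norm (RS_summable_norm hp)
    _ ≤ ∑' i : ℕ, (1:ℝ) / 2 ^ (i + 1) :=
        Summable.tsum_le_tsum (term_norm_le hp) (RS_summable_norm hp)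
          (by simpa [pow_succ, div_div, mul_comm, div_eq_mul_inv] using (summable_geometric_two' 1))
    _ = 1 := by simpa [pow_succ, div_div, mul_comm, div_eq_mul_inv] using (tsum_geometric_two' 1)

lemma tail_tsum {p : ℕ → ℤ} (hp : ∀ i, p i = -1 ∨ p i = 0 ∨ p i = 1) {x : ℝ}
    (hx : x = ∑' i : ℕ, (p i : ℝ) / 2 ^ (i + 1)) :
    2 * x - (p 0 : ℝ) = ∑' i : ℕ, (p (i + 1) : ℝ) / 2 ^ (i + 1) := by
  have h0 := Summable.tsum_eq_zero_add (RS_summable hp)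
  have h1 : ∑' i : ℕ, (p (i + 1) : ℝ) / 2 ^ (i + 1 + 1)
      = ∑' i : ℕ, (1/2) * ((p (i + 1) : ℝ) / 2 ^ (i + 1)) := by
    apply tsum_congr; intro i; rw [pow_succ]; ring
  rw [hx, h0, h1, tsum_mul_left]; push_cast; ring

theorem RS_greatest_fixpoint :
    (∀ (p : ℕ → ℤ) (x : ℝ), RS p x ↔
      ((∀ i, p i = -1 ∨ p i = 0 ∨ p i = 1) ∧ |2 * x - (p 0 : ℝ)| ≤ 1 ∧
        RS (fun i => p (i + 1)) (2 * x - (p 0 : ℝ)))) ∧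
    (∀ R : (ℕ → ℤ) → ℝ → Prop,
      (∀ p x, R p x → ∀ i, p i = -1 ∨ p i = 0 ∨ p i = 1) →
      (∀ p x, R p x → |2 * x - (p 0 : ℝ)| ≤ 1 ∧
        R (fun i => p (i + 1)) (2 * x - (p 0 : ℝ))) →
      ∀ p x, R p x → RS p x) := by
  constructor
  · intro p x
    constructor
    · rintro ⟨hp, hx⟩
      have hp' : ∀ i, p (i + 1) = -1 ∨ p (i + 1) = 0 ∨ p (i + 1) = 1 := fun i => hp (i + 1)
      have ht := tail_tsum hp hx
      exact ⟨hp, ht ▸ RS_tail_bound hp', hp', ht⟩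
    · rintro ⟨hp, _, _, ht⟩
      refine ⟨hp, ?_⟩
      have := tail_tsum hp (rfl : (∑' i : ℕ, (p i : ℝ) / 2 ^ (i + 1)) = _)
      -- this : 2 * tsum - p 0 = tail tsum ; ht : 2x - p0 = tail tsum
      have h2 : 2 * x - (p 0 : ℝ) = 2 * (∑' i : ℕ, (p i : ℝ) / 2 ^ (i + 1)) - (p 0 : ℝ) := by
        rw [ht, this]
      linarith
  · intro R hdig hstep p x hR
    have hp : ∀ i, p i = -1 ∨ p i = 0 ∨ p i = 1 := hdig p x hR
    refine ⟨hp, ?_⟩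
    set S : ℕ → ℝ := fun n => ∑ i ∈ Finset.range n, (p i : ℝ) / 2 ^ (i + 1) with hS
    set y : ℕ → ℝ := fun n => 2 ^ n * (x - S n) with hy
    have key : ∀ n, R (fun i => p (i + n)) (y n) := by
      intro n
      induction n with
      | zero => simpa [hy, hS] using hR
      | succ n ih =>
        have h := (hstep _ _ ih).2
        have heq : (fun i => p (i + 1 + n)) = (fun i => p (i + (n + 1))) := by
          funext i; congr 1; omega
        have hval : 2 * y n - (p (0 + n) : ℝ) = y (n + 1) := by
          simp only [hy, hS, Finset.sum_range_succ, Nat.zero_add]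
          rw [pow_succ]
          field_simp
          ring
        rw [heq, hval] at h
        exact h
    have hbound : ∀ n, |y n| ≤ 1 := by
      intro n
      cases n with
      | zero =>
        have h1 := (hstep _ _ (key 0)).1
        have h2 := digit_abs_le hp 0
        simp only [hy, hS, pow_zero, Finset.range_zero, Finset.sum_empty, sub_zero, one_mul]
        have : |2 * y 0 - (p (0 + 0) : ℝ)| ≤ 1 := h1
        simp only [hy, hS, pow_zero, Finset.range_zero, Finset.sum_empty, sub_zero, one_mul,
          Nat.zero_add] at this
        have h3 : |2 * x| ≤ 2 := by
          calc |2 * x| = |(2 * x - (p 0 : ℝ)) + (p 0 : ℝ)| := by ring_nf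
            _ ≤ |2 * x - (p 0 : ℝ)| + |(p 0 : ℝ)| := abs_add_le _ _
            _ ≤ 2 := by linarith
        rw [abs_mul, abs_two] at h3
        linarith
      | succ n =>
        have h := (hstep _ _ (key n)).1
        have hval : 2 * y n - (p (0 + n) : ℝ) = y (n + 1) := by
          simp only [hy, hS, Finset.sum_range_succ, Nat.zero_add]
          rw [pow_succ]
          field_simp
          ring
        rw [hval] at h
        exact h
    have hdist : ∀ n, |x - S n| ≤ (1/2) ^ n := by
      intro n
      have := hbound n
      have h2 : (0:ℝ) < 2 ^ n := by positivity
      rw [hy, abs_mul, abs_of_pos h2] at this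
      rw [div_pow, one_pow, le_div_iff₀ h2, mul_comm]
      exact this
    have htend : Filter.Tendsto S Filter.atTop (nhds x) := by
      rw [tendsto_iff_dist_tendsto_zero]
      apply squeeze_zero (fun n => dist_nonneg) (fun n => ?_)
        (tendsto_pow_atTop_nhds_zero_of_lt_one (r := (1:ℝ)/2) (by norm_num) (by norm_num))
      rw [Real.dist_eq, abs_sub_comm]
      exact hdist n
    have htsum := (RS_summable hp).hasSum.tendsto_sum_nat
    exact tendsto_nhds_unique htend htsum
end

section
/- Every real number x ∈ [-1,1] has a signed digit representation: there exists p : ℕ → {-1,0,1} with x = Σ_{i=0}^∞ p_i · 2^{-(i+1)}. -/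
noncomputable def sdDig (y : ℝ) : ℤ := if 0 ≤ y then 1 else -1

noncomputable def sdRem (x : ℝ) : ℕ → ℝ
  | 0 => x
  | n + 1 => 2 * sdRem x n - (sdDig (sdRem x n) : ℝ)

lemma sdRem_bound (x : ℝ) (h1 : -1 ≤ x) (h2 : x ≤ 1) :
    ∀ n, -1 ≤ sdRem x n ∧ sdRem x n ≤ 1 := by
  intro n
  induction n with
  | zero => exact ⟨h1, h2⟩
  | succ n ih =>
    simp only [sdRem, sdDig]
    rcases ih with ⟨hl, hr⟩
    by_cases h : 0 ≤ sdRem x n <;> simp [h] <;> first | (refine ⟨by linarith, by linarith⟩) | linarith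

lemma sdRem_eq (x : ℝ) :
    ∀ n, x = (∑ i ∈ Finset.range n, (sdDig (sdRem x i) : ℝ) / 2 ^ (i + 1))
        + sdRem x n / 2 ^ n := by
  intro n
  induction n with
  | zero => simp [sdRem]
  | succ n ih =>
    rw [Finset.sum_range_succ]
    have : sdRem x (n + 1) = 2 * sdRem x n - (sdDig (sdRem x n) : ℝ) := rfl
    rw [this]
    conv_lhs => rw [ih]
    ring

theorem exists_signed_digit_representation (x : ℝ) (h1 : -1 ≤ x) (h2 : x ≤ 1) :
    ∃ p : ℕ → ℤ, (∀ i, p i = -1 ∨ p i = 0 ∨ p i = 1) ∧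
      x = ∑' i : ℕ, (p i : ℝ) / 2 ^ (i + 1) := by
  refine ⟨fun i => sdDig (sdRem x i), ?_, ?_⟩
  · intro i; by_cases h : 0 ≤ sdRem x i <;> simp [sdDig, h]
  · set f : ℕ → ℝ := fun i => (sdDig (sdRem x i) : ℝ) / 2 ^ (i + 1) with hf
    have hsummable : Summable f := by
      apply Summable.of_norm_bounded (g := fun i => (1/2 : ℝ) ^ i)
        (summable_geometric_of_lt_one (by norm_num) (by norm_num))
      intro i
      have : |(sdDig (sdRem x i) : ℝ)| ≤ 1 := by
        unfold sdDig; split <;> simp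
      rw [hf]
      simp only [Real.norm_eq_abs, abs_div, abs_pow]
      rw [abs_two]
      calc |(sdDig (sdRem x i) : ℝ)| / 2 ^ (i+1) ≤ 1 / 2 ^ (i+1) := by
            apply div_le_div_of_nonneg_right this (by positivity) |>.trans_eq rfl
        _ ≤ (1/2 : ℝ) ^ i := by
            rw [div_pow, one_pow]
            apply div_le_div_of_nonneg_left (by norm_num) (by positivity)
            exact pow_le_pow_right₀ (by norm_num) (by omega)
    have hlim : Filter.Tendsto (fun n => ∑ i ∈ Finset.range n, f i)
        Filter.atTop (nhds x) := by
      have key : ∀ n, ∑ i ∈ Finset.range n, f i = x - sdRem x n / 2 ^ n := by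
        intro n
        have := sdRem_eq x n
        rw [hf]; linarith
      simp only [key]
      have : Filter.Tendsto (fun n : ℕ => sdRem x n / 2 ^ n) Filter.atTop (nhds 0) := by
        apply squeeze_zero_norm (fun n => ?_)
          (tendsto_pow_atTop_nhds_zero_of_lt_one (by norm_num : (0:ℝ) ≤ 1/2) (by norm_num))
        have hb := sdRem_bound x h1 h2 n
        have : |sdRem x n| ≤ 1 := abs_le.mpr hb
        rw [Real.norm_eq_abs, abs_div, abs_pow, abs_two, div_pow, one_pow]
        exact div_le_div_of_nonneg_right this (by positivity)
      have := (tendsto_const_nhds (x := x) (f := Filter.atTop (α := ℕ))).sub this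
      simpa using this
    have := hsummable.hasSum.tendsto_sum_nat
    exact tendsto_nhds_unique hlim this ▸ rfl
end

section
/- The value represented by a total Gray code sequence is insensitive to a single digit flip at a position where the represented number's tent-map iterate is 0: if q and q' differ only at index k and t^k(x) = 0 where t(x) = 1 - 2|x| and x is represented by q, then q' also represents x; equivalently, Σ_{i}(-∏_{j≤i}(-q_j))2^{-(i+1)} = Σ_{i}(-∏_{j≤i}(-q'_j))2^{-(i+1)} when q_j = q'_j for all j ≠ k and the common tail after position k is R, L, L, L, ... . -/
lemma gray_aux (q : ℕ → ℝ) (k : ℕ)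
    (hq : ∀ i, q i = -1 ∨ q i = 1)
    (htail1 : q (k + 1) = 1)
    (htail2 : ∀ j, j > k + 1 → q j = -1) :
    (∑' i : ℕ, (-(∏ j ∈ Finset.range (i + 1), (-(q j)))) / 2 ^ (i + 1)) =
    ∑ i ∈ Finset.range k, (-(∏ j ∈ Finset.range (i + 1), (-(q j)))) / 2 ^ (i + 1) := by
  set f : ℕ → ℝ := fun i => (-(∏ j ∈ Finset.range (i + 1), (-(q j)))) / 2 ^ (i + 1) with hf
  have habs : ∀ i, |∏ j ∈ Finset.range (i + 1), (-(q j))| = 1 := by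
    intro i
    rw [Finset.abs_prod]
    apply Finset.prod_eq_one
    intro j _
    rcases hq j with h | h <;> rw [h] <;> norm_num
  have hsum : Summable f := by
    apply Summable.of_norm
    have hnorm : ∀ i, ‖f i‖ = (1/2 : ℝ) ^ (i + 1) := by
      intro i
      simp only [hf, Real.norm_eq_abs, abs_div, abs_neg, habs, abs_pow]
      norm_num
      rw [one_div, inv_pow]
    have hg : Summable (fun i : ℕ => (1/2 : ℝ) ^ (i + 1)) := by
      simpa [pow_succ] using summable_geometric_two.mul_right (1/2 : ℝ)
    exact hg.congr (fun i => (hnorm i).symm)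
  set P : ℝ := ∏ j ∈ Finset.range (k + 1), (-(q j)) with hPdef
  have hP : ∀ i, ∏ j ∈ Finset.range (i + (k + 1) + 1), (-(q j)) = -P := by
    intro i
    induction i with
    | zero =>
      simp only [Nat.zero_add]
      rw [Finset.prod_range_succ, htail1, hPdef]
      ring
    | succ n ih =>
      rw [show n + 1 + (k + 1) + 1 = (n + (k + 1) + 1) + 1 by ring,
        Finset.prod_range_succ, ih, htail2 (n + (k + 1) + 1) (by omega)]
      ring
  have htail : (∑' i : ℕ, f (i + (k + 1))) = P / 2 ^ (k + 1) := by
    have hpt : ∀ i : ℕ, f (i + (k + 1)) = (P / 2 ^ (k + 2)) * (1/2) ^ i := by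
      intro i
      simp only [hf]
      rw [hP i]
      rw [show i + (k + 1) + 1 = i + (k + 2) by ring, pow_add]
      field_simp
      ring_nf
      try tauto
      rw [mul_assoc, ← mul_pow]; norm_num
    rw [tsum_congr hpt, tsum_mul_left, tsum_geometric_two]
    rw [show k + 2 = (k + 1) + 1 by ring, pow_succ]
    ring
  rw [← hsum.sum_add_tsum_nat_add (k + 1), htail, Finset.sum_range_succ]
  have hfk : f k = -P / 2 ^ (k + 1) := by simp only [hf, hPdef]
  rw [hfk]
  ring

theorem gray_value_insensitive_flip (q q' : ℕ → ℝ) (k : ℕ)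
    (hq : ∀ i, q i = -1 ∨ q i = 1) (hq' : ∀ i, q' i = -1 ∨ q' i = 1)
    (hdiff : ∀ j, j ≠ k → q j = q' j)
    (htail1 : q (k + 1) = 1)
    (htail2 : ∀ j, j > k + 1 → q j = -1) :
    (∑' i : ℕ, (-(∏ j ∈ Finset.range (i + 1), (-(q j)))) / 2 ^ (i + 1)) =
    (∑' i : ℕ, (-(∏ j ∈ Finset.range (i + 1), (-(q' j)))) / 2 ^ (i + 1)) := by
  have h1' : q' (k + 1) = 1 := by rw [← hdiff (k + 1) (by omega)]; exact htail1
  have h2' : ∀ j, j > k + 1 → q' j = -1 := fun j hj => by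
    rw [← hdiff j (by omega)]; exact htail2 j hj
  rw [gray_aux q k hq htail1 htail2, gray_aux q' k hq' h1' h2']
  apply Finset.sum_congr rfl
  intro i hi
  have hik : i < k := Finset.mem_range.mp hi
  congr 2
  apply Finset.prod_congr rfl
  intro j hj
  have hjk : j < i + 1 := Finset.mem_range.mp hj
  rw [hdiff j (by omega)]
end

section
/- Tail of Gray code computes the tent map: if q : ℕ → {-1,1} represents x ∈ [-1,1] via the Gray sum, then the shifted sequence (q_{i+1})_i represents t(x) = 1 - 2|x|. -/
theorem gray_tail_tent (q : ℕ → ℝ) (hq : ∀ i, q i = -1 ∨ q i = 1) (x : ℝ)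
    (h1 : -1 ≤ x) (h2 : x ≤ 1)
    (hx : x = ∑' i : ℕ, (-(∏ j ∈ Finset.range (i + 1), (-(q j)))) / 2 ^ (i + 1)) :
    1 - 2 * |x| =
      ∑' i : ℕ, (-(∏ j ∈ Finset.range (i + 1), (-(q (j + 1))))) / 2 ^ (i + 1) := by
  set f : ℕ → ℝ := fun i => (-(∏ j ∈ Finset.range (i + 1), (-(q j)))) / 2 ^ (i + 1) with hf
  have habs : ∀ i, |q i| = 1 := fun i => by rcases hq i with h | h <;> simp [h]
  have hq0sq : q 0 * q 0 = 1 := by rcases hq 0 with h | h <;> rw [h] <;> norm_num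
  have hfabs : ∀ i, |f i| = (1/2 : ℝ) ^ (i + 1) := by
    intro i
    simp only [hf, abs_div, abs_neg, Finset.abs_prod]
    rw [Finset.prod_congr rfl (fun j _ => habs j)]
    rw [Finset.prod_const_one, abs_of_pos (by positivity : (0:ℝ) < 2 ^ (i+1))]
    rw [div_pow]
    norm_num
  have hsum : Summable f := by
    apply Summable.of_abs
    apply (summable_geometric_two.mul_right (1/2)).congr
    intro i
    rw [hfabs, pow_succ]
  -- f 0 = q 0 / 2
  have hf0 : f 0 = q 0 / 2 := by
    simp [hf]
  -- shifted term relation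
  have hkey : ∀ i, (-(∏ j ∈ Finset.range (i + 1), (-(q (j + 1))))) / 2 ^ (i + 1)
      = -(q 0) * (2 * f (i + 1)) := by
    intro i
    have hp : (∏ j ∈ Finset.range (i + 2), (-(q j)))
        = (∏ j ∈ Finset.range (i + 1), (-(q (j + 1)))) * (-(q 0)) :=
      Finset.prod_range_succ' (fun j => -(q j)) (i + 1)
    have : (∏ j ∈ Finset.range (i + 1), (-(q (j + 1))))
        = (∏ j ∈ Finset.range (i + 2), (-(q j))) * (-(q 0)) := by
      rw [hp, mul_assoc, neg_mul_neg, hq0sq, mul_one]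
    rw [this]
    simp only [hf]
    field_simp
    ring
  rw [tsum_congr hkey]
  have hsum1 : Summable (fun i => f (i + 1)) := by
    exact (summable_nat_add_iff 1).mpr hsum
  rw [tsum_mul_left, tsum_mul_left]
  have hx' : x = f 0 + ∑' i, f (i + 1) := by
    rw [hx]; exact Summable.tsum_eq_zero_add hsum
  set r : ℝ := ∑' i, f (i + 1) with hr
  have hrbound : |r| ≤ 1/2 := by
    have h1' : |r| ≤ ∑' i, |f (i + 1)| := by
      simpa using norm_tsum_le_tsum_norm (f := fun i => f (i+1))
        (by apply hsum1.abs.congr; intro i; simp)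
    have h2' : ∑' i : ℕ, |f (i + 1)| = 1/2 := by
      have : ∀ i : ℕ, |f (i + 1)| = (1/2:ℝ)^i * (1/4) := by
        intro i; rw [hfabs]; ring
      rw [tsum_congr this, tsum_mul_right, tsum_geometric_two]
      norm_num
    linarith [h1', h2']
  have hq0x : q 0 * x ≥ 0 := by
    have : q 0 * x = 1/2 + q 0 * r := by
      rw [hx', hf0]; linear_combination (1/2 : ℝ) * hq0sq
    rw [this]
    have : q 0 * r ≥ -(1/2) := by
      have := abs_mul (q 0) r
      rw [habs 0, one_mul] at this
      have := neg_abs_le (q 0 * r)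
      rw [abs_mul, habs 0, one_mul] at this
      linarith [hrbound]
    linarith
  have habsx : |x| = q 0 * x := by
    have : |q 0 * x| = q 0 * x := abs_of_nonneg hq0x
    rw [abs_mul, habs 0, one_mul] at this
    exact this
  rw [habsx, hx', hf0]
  linear_combination -hq0sq
end

section
/- Characterization of signed digit representations of 0: a stream p : ℕ → {-1,0,1} represents 0 (i.e. Σ p_i 2^{-(i+1)} = 0) if and only if p is of one of the forms 0^ω, 0^k (-1) 1^ω, or 0^k 1 (-1)^ω for some k ≥ 0. -/
open Finset

private lemma sd_summable (p : ℕ → ℤ) (hp : ∀ i, p i = -1 ∨ p i = 0 ∨ p i = 1) :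
    Summable (fun i : ℕ => (p i : ℝ) / 2 ^ (i + 1)) := by
  have hs : Summable (fun i : ℕ => (1/2 : ℝ) ^ (i + 1)) := by
    have := (summable_geometric_of_lt_one (by norm_num : (0:ℝ) ≤ 1/2) (by norm_num)).mul_left (1/2 : ℝ)
    exact this.congr (fun i => by ring)
  apply Summable.of_norm_bounded hs
  intro i
  have h1 : |(p i : ℝ)| ≤ 1 := by
    rcases hp i with h | h | h <;> simp [h]
  rw [Real.norm_eq_abs, abs_div, abs_of_nonneg (by positivity : (0:ℝ) ≤ 2 ^ (i+1))]
  rw [div_pow, one_pow]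
  gcongr

private lemma sd_geom : (∑' i : ℕ, (1 : ℝ) / 2 ^ (i + 1)) = 1 := by
  have h : (∑' i : ℕ, (1/2 : ℝ) * (1/2) ^ i) = (1/2) * (1 - 1/2)⁻¹ := by
    rw [tsum_mul_left, tsum_geometric_of_lt_one (by norm_num) (by norm_num)]
  have : (fun i : ℕ => (1 : ℝ) / 2 ^ (i + 1)) = fun i => (1/2 : ℝ) * (1/2) ^ i := by
    funext i; rw [pow_succ]; field_simp; rw [← mul_pow]; norm_num
  rw [this, h]; norm_num

private lemma sd_all_ones (q : ℕ → ℤ) (hq : ∀ i, q i = -1 ∨ q i = 0 ∨ q i = 1)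
    (h : (∑' i : ℕ, (q i : ℝ) / 2 ^ (i + 1)) = 1) : ∀ i, q i = 1 := by
  have hsq := sd_summable q hq
  have hs1 : Summable (fun i : ℕ => (1 : ℝ) / 2 ^ (i + 1)) := by
    have := sd_summable (fun _ => 1) (fun i => Or.inr (Or.inr rfl))
    simpa using this
  have hsd : Summable (fun i : ℕ => (1 : ℝ) / 2 ^ (i + 1) - (q i : ℝ) / 2 ^ (i + 1)) :=
    hs1.sub hsq
  have htd : (∑' i : ℕ, ((1 : ℝ) / 2 ^ (i + 1) - (q i : ℝ) / 2 ^ (i + 1))) = 0 := by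
    rw [Summable.tsum_sub hs1 hsq, sd_geom, h]; ring
  intro j
  have hnn : ∀ i, 0 ≤ (1 : ℝ) / 2 ^ (i + 1) - (q i : ℝ) / 2 ^ (i + 1) := by
    intro i
    have : (q i : ℝ) ≤ 1 := by rcases hq i with h | h | h <;> simp [h]
    have h2 : (0:ℝ) < 2 ^ (i+1) := by positivity
    rw [sub_nonneg]
    gcongr
  have hle : (1 : ℝ) / 2 ^ (j + 1) - (q j : ℝ) / 2 ^ (j + 1) ≤ 0 := by
    rw [← htd]
    exact Summable.le_tsum hsd j (fun i _ => hnn i)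
  have heq : (1 : ℝ) / 2 ^ (j + 1) - (q j : ℝ) / 2 ^ (j + 1) = 0 :=
    le_antisymm hle (hnn j)
  have h2 : (0:ℝ) < 2 ^ (j+1) := by positivity
  have : (q j : ℝ) = 1 := by
    field_simp at heq
    linarith
  exact_mod_cast this

private lemma sd_all_neg_ones (q : ℕ → ℤ) (hq : ∀ i, q i = -1 ∨ q i = 0 ∨ q i = 1)
    (h : (∑' i : ℕ, (q i : ℝ) / 2 ^ (i + 1)) = -1) : ∀ i, q i = -1 := by
  have hq' : ∀ i, -q i = -1 ∨ -q i = 0 ∨ -q i = 1 := by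
    intro i; rcases hq i with h | h | h <;> simp [h]
  have h' : (∑' i : ℕ, ((-q i : ℤ) : ℝ) / 2 ^ (i + 1)) = 1 := by
    have : (fun i : ℕ => ((-q i : ℤ) : ℝ) / 2 ^ (i + 1)) =
        fun i => -((q i : ℝ) / 2 ^ (i + 1)) := by
      funext i; push_cast; ring
    rw [this, tsum_neg, h]; ring
  intro i
  have := sd_all_ones (fun i => -q i) hq' h' i
  omega

theorem sd_representations_of_zero (p : ℕ → ℤ)
    (hp : ∀ i, p i = -1 ∨ p i = 0 ∨ p i = 1) :
    (∑' i : ℕ, (p i : ℝ) / 2 ^ (i + 1)) = 0 ↔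
      ((∀ i, p i = 0) ∨
       (∃ k : ℕ, (∀ i, i < k → p i = 0) ∧ p k = -1 ∧ ∀ i, i > k → p i = 1) ∨
       (∃ k : ℕ, (∀ i, i < k → p i = 0) ∧ p k = 1 ∧ ∀ i, i > k → p i = -1)) := by
  have hsp := sd_summable p hp
  constructor
  · intro h0
    by_cases hall : ∀ i, p i = 0
    · exact Or.inl hall
    · push_neg at hall
      have hex : ∃ k, p k ≠ 0 := hall
      set k := Nat.find hex with hk
      have hpk : p k ≠ 0 := Nat.find_spec hex
      have hlt : ∀ i, i < k → p i = 0 := fun i hi => by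
        by_contra hne
        exact absurd (Nat.find_le hne) (not_le.mpr hi)
      -- split sum at k+1
      have hsplit := Summable.sum_add_tsum_nat_add (f := fun i : ℕ => (p i : ℝ) / 2 ^ (i + 1)) (k+1) hsp
      have hfin : (∑ i ∈ Finset.range (k+1), (p i : ℝ) / 2 ^ (i + 1)) = (p k : ℝ) / 2 ^ (k+1) := by
        rw [Finset.sum_eq_single k]
        · intro b hb hbk
          have : b < k := lt_of_le_of_ne (Nat.lt_succ_iff.mp (Finset.mem_range.mp hb)) hbk
          simp [hlt b this]
        · intro hk'; exact absurd (Finset.self_mem_range_succ k) hk'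
      set q : ℕ → ℤ := fun i => p (i + (k+1)) with hqdef
      have hq : ∀ i, q i = -1 ∨ q i = 0 ∨ q i = 1 := fun i => hp _
      have hsq := sd_summable q hq
      have htail : (∑' i : ℕ, (p (i + (k+1)) : ℝ) / 2 ^ (i + (k+1) + 1)) =
          (∑' i : ℕ, (q i : ℝ) / 2 ^ (i + 1)) / 2 ^ (k+1) := by
        rw [← tsum_div_const]
        apply tsum_congr
        intro i
        rw [hqdef]
        rw [div_div, ← pow_add]
        ring_nf
      rw [← hsplit] at h0
      rw [hfin, htail] at h0
      have h2 : (0:ℝ) < 2 ^ (k+1) := by positivity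
      have hSq : (∑' i : ℕ, (q i : ℝ) / 2 ^ (i + 1)) = -(p k : ℝ) := by
        field_simp at h0
        linarith
      rcases hp k with hk1 | hk0 | hk1
      · -- p k = -1, tail sums to 1
        refine Or.inr (Or.inl ⟨k, hlt, hk1, ?_⟩)
        intro i hi
        have hS1 : (∑' i : ℕ, (q i : ℝ) / 2 ^ (i + 1)) = 1 := by
          rw [hSq, hk1]; norm_num
        have := sd_all_ones q hq hS1 (i - (k+1))
        rw [hqdef] at this
        simpa [Nat.sub_add_cancel hi] using this
      · exact absurd hk0 hpk
      · refine Or.inr (Or.inr ⟨k, hlt, hk1, ?_⟩)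
        intro i hi
        have hS1 : (∑' i : ℕ, (q i : ℝ) / 2 ^ (i + 1)) = -1 := by
          rw [hSq, hk1]; norm_num
        have := sd_all_neg_ones q hq hS1 (i - (k+1))
        rw [hqdef] at this
        simpa [Nat.sub_add_cancel hi] using this
  · rintro (hall | ⟨k, hlt, hk, hgt⟩ | ⟨k, hlt, hk, hgt⟩)
    · have : (fun i : ℕ => (p i : ℝ) / 2 ^ (i + 1)) = fun _ => 0 := by
        funext i; simp [hall i]
      rw [this, tsum_zero]
    all_goals {
      have hsplit := Summable.sum_add_tsum_nat_add (f := fun i : ℕ => (p i : ℝ) / 2 ^ (i + 1)) (k+1) hsp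
      rw [← hsplit]
      have hfin : (∑ i ∈ Finset.range (k+1), (p i : ℝ) / 2 ^ (i + 1)) = (p k : ℝ) / 2 ^ (k+1) := by
        rw [Finset.sum_eq_single k]
        · intro b hb hbk
          have : b < k := lt_of_le_of_ne (Nat.lt_succ_iff.mp (Finset.mem_range.mp hb)) hbk
          simp [hlt b this]
        · intro hk'; exact absurd (Finset.self_mem_range_succ k) hk'
      have htail : (∑' i : ℕ, (p (i + (k+1)) : ℝ) / 2 ^ (i + (k+1) + 1)) =
          (∑' i : ℕ, (p (i + (k+1)) : ℝ) / 2 ^ (i + 1)) / 2 ^ (k+1) := by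
        rw [← tsum_div_const]
        apply tsum_congr
        intro i
        rw [div_div, ← pow_add]
        ring_nf
      have hfix : (fun i : ℕ => (p (i + (k+1)) : ℝ) / 2 ^ (i + 1)) =
          fun i : ℕ => ((p k : ℝ) * (-1)) / 2 ^ (i + 1) := by
        funext i
        have := hgt (i + (k+1)) (by omega)
        rw [this, hk]; push_cast; ring
      rw [hfin, htail, hfix]
      have : (∑' i : ℕ, ((p k : ℝ) * (-1)) / 2 ^ (i + 1)) = (p k : ℝ) * (-1) := by
        have : (fun i : ℕ => ((p k : ℝ) * (-1)) / 2 ^ (i + 1)) =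
            fun i : ℕ => ((p k : ℝ) * (-1)) * ((1:ℝ) / 2 ^ (i + 1)) := by
          funext i; ring
        rw [this, tsum_mul_left, sd_geom, mul_one]
      rw [this, hk]
      push_cast
      ring
    }
end
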